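/- Let $l \in \mathbb{Z}$ with $l \geq 1$. Then $\sum_{u=0}^{l} \frac{(-1)^u}{1+l-u} \cdot \frac{u!\,(2l-u)!}{l!\,l!} \binom{l}{u}^2 = 0$. -/
import Mathlib


open Finset

lemma keyA_sum_xi (l : ℕ) (hl : 1 ≤ l) :
    ∑ m ∈ range (l+1), (-1:ℝ)^(m+l) * (l.choose m) * ((m+l).choose (l-1)) = 0 := by
  have h := sub_pow (Polynomial.X + 1 : Polynomial ℝ) 1 l
  simp only [add_sub_cancel_right, one_pow, mul_one] at h
  have h2 : ((Polynomial.X:Polynomial ℝ)^l * (Polynomial.X+1)^l).coeff (l-1)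
      = ∑ m ∈ range (l+1), (-1:ℝ)^(m+l) * (l.choose m) * ((m+l).choose (l-1)) := by
    rw [h, Finset.sum_mul, Polynomial.finset_sum_coeff]
    refine Finset.sum_congr rfl fun m hm => ?_
    have : (-1:Polynomial ℝ)^(m+l) * (Polynomial.X+1)^m * (l.choose m : Polynomial ℝ) * (Polynomial.X+1)^l
        = Polynomial.C ((-1:ℝ)^(m+l) * (l.choose m)) * (Polynomial.X+1)^(m+l) := by
      simp [Polynomial.C_mul, Polynomial.C_pow, map_neg, map_one, Polynomial.C_eq_natCast]
      ring
    rw [this, Polynomial.coeff_C_mul, Polynomial.coeff_X_add_one_pow]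
  rw [← h2, mul_comm, Polynomial.coeff_mul_X_pow']
  rw [if_neg (by omega)]

lemma keyB_sum_xi (l : ℕ) (hl : 1 ≤ l) :
    ∑ u ∈ range (l+1), (-1:ℝ)^u * (l.choose u) * ((2*l-u).choose (l-1)) = 0 := by
  rw [← Finset.sum_range_reflect]
  rw [← keyA_sum_xi l hl]
  refine Finset.sum_congr rfl fun j hj => ?_
  have hjl : j ≤ l := by simpa using Nat.lt_succ_iff.mp (Finset.mem_range.mp hj)
  have e1 : l + 1 - 1 - j = l - j := by omega
  have e2 : 2*l - (l - j) = j + l := by omega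
  have e3 : l.choose (l - j) = l.choose j := Nat.choose_symm hjl
  have e4 : (-1:ℝ)^(l - j) = (-1:ℝ)^(j+l) := by
    rw [show j + l = (l - j) + 2*j by omega, pow_add, pow_mul]
    simp
  rw [e1, e2, e3, e4]

theorem sum_xi_zero (l : ℕ) (hl : 1 ≤ l) :
    ∑ u ∈ Finset.range (l + 1),
      ((-1 : ℝ) ^ u / (1 + (l : ℝ) - (u : ℝ))) *
        ((Nat.factorial u * Nat.factorial (2 * l - u) : ℝ) /
          (Nat.factorial l * Nat.factorial l)) *
        ((Nat.choose l u : ℝ)) ^ 2 = 0 := by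
  have step : ∀ u ∈ Finset.range (l+1),
      ((-1 : ℝ) ^ u / (1 + (l : ℝ) - (u : ℝ))) *
        ((Nat.factorial u * Nat.factorial (2 * l - u) : ℝ) /
          (Nat.factorial l * Nat.factorial l)) *
        ((Nat.choose l u : ℝ)) ^ 2
      = (-1:ℝ)^u * (l.choose u) * ((2*l-u).choose (l-1)) / l := by
    intro u hu
    have hul : u ≤ l := Nat.lt_succ_iff.mp (Finset.mem_range.mp hu)
    have hA : (l.factorial : ℝ) = (l.choose u) * u.factorial * (l-u).factorial := by
      exact_mod_cast (Nat.choose_mul_factorial_mul_factorial hul).symm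
    have hB : ((2*l-u).factorial : ℝ) = ((2*l-u).choose (l-1)) * (l-1).factorial * (l+1-u).factorial := by
      have h1 : l - 1 ≤ 2*l - u := by omega
      have h2 : 2*l - u - (l-1) = l+1-u := by omega
      have := Nat.choose_mul_factorial_mul_factorial h1
      rw [h2] at this
      exact_mod_cast this.symm
    have hC : (l.factorial : ℝ) = l * (l-1).factorial := by
      rw [show l = (l-1)+1 by omega, Nat.factorial_succ]; push_cast; ring_nf
    have hD : ((l+1-u).factorial : ℝ) = ((l+1-u : ℕ)) * (l-u).factorial := by
      rw [show l+1-u = (l-u)+1 by omega, Nat.factorial_succ]; push_cast; ring_nf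
    have hE : (1 + (l:ℝ) - u) = ((l+1-u : ℕ) : ℝ) := by
      push_cast [Nat.cast_sub (by omega : u ≤ l+1)]; ring
    have h1 : ((l+1-u : ℕ) : ℝ) ≠ 0 := by exact_mod_cast (by omega : l+1-u ≠ 0)
    have hl0 : (l:ℝ) ≠ 0 := by positivity
    have hf : (l.factorial : ℝ) ≠ 0 := by positivity
    have P : (u.factorial:ℝ) * (2*l-u).factorial * (l.choose u)^2 * l
        = (l.choose u) * ((2*l-u).choose (l-1)) * ((l+1-u:ℕ):ℝ) * (l.factorial * l.factorial) := by
      linear_combination (((u.factorial:ℝ)) * (l.choose u)^2 * l) * hB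
        + (((u.factorial:ℝ)) * (l.choose u)^2 * ((2*l-u).choose (l-1)) * l * (l-1).factorial) * hD
        - (((u.factorial:ℝ)) * (l.choose u)^2 * ((2*l-u).choose (l-1)) * ((l+1-u:ℕ):ℝ) * (l-u).factorial) * hC
        - (((l.choose u):ℝ) * ((2*l-u).choose (l-1)) * ((l+1-u:ℕ):ℝ) * l.factorial) * hA
    rw [hE, div_mul_div_comm, div_mul_eq_mul_div, div_eq_div_iff (by positivity) hl0]
    linear_combination ((-1:ℝ)^u) * P
  rw [Finset.sum_congr rfl step, ← Finset.sum_div, keyB_sum_xi l hl, zero_div]
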